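/- Let 𝕜 be an algebraically closed field, N ≥ 1, and X ∈ M_N(𝕜). The conjugation orbit GL_N(𝕜)·X ⊆ M_N(𝕜) is stable under scalar multiplication by all t ∈ 𝕜 \ {0} (i.e. tX is conjugate to X for every t ≠ 0) if and only if X is nilpotent. -/

import Mathlib

open Matrix

section Aux

open Polynomial

variable {𝕜 : Type*} [Field 𝕜]

lemma aux_charpoly_eval {n : Type*} [Fintype n] [DecidableEq n] (A : Matrix n n 𝕜) (s : 𝕜) :
    A.charpoly.eval s = (Matrix.scalar n s - A).det := by
  rw [Matrix.charpoly, _root_.eval_det, Matrix.matPolyEquiv_charmatrix]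
  simp

noncomputable def polyScale (t : 𝕜) : 𝕜[X] →ₐ[𝕜] 𝕜[X] := aeval (t • X)

lemma polyScale_X (t : 𝕜) : polyScale t (X : 𝕜[X]) = t • X := by
  simp only [polyScale, aeval_X]

lemma polyScale_polyScale (c d : 𝕜) (p : 𝕜[X]) :
    polyScale c (polyScale d p) = polyScale (c * d) p := by
  rw [← AlgHom.comp_apply]
  congr 1
  apply Polynomial.algHom_ext
  simp only [AlgHom.coe_comp, Function.comp_apply, polyScale, aeval_X, _root_.map_smul,
    smul_smul, mul_comm c d]

lemma polyScale_one (p : 𝕜[X]) : polyScale (1 : 𝕜) p = p := by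
  rw [polyScale]
  rw [one_smul]
  exact aeval_X_left_apply p

end Aux

section Conv

open Polynomial Module

variable {𝕜 : Type*} [Field 𝕜]

noncomputable def quotScaleHom (t : 𝕜) (e : ℕ) :
    (𝕜[X] ⧸ (𝕜[X] ∙ ((X : 𝕜[X]) ^ e))) →+* (𝕜[X] ⧸ (𝕜[X] ∙ ((X : 𝕜[X]) ^ e))) :=
  Ideal.Quotient.lift (𝕜[X] ∙ ((X : 𝕜[X]) ^ e))
    ((Ideal.Quotient.mk _).comp (polyScale t).toRingHom) (by
      intro a ha
      obtain ⟨c, rfl⟩ := Submodule.mem_span_singleton.mp ha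
      rw [RingHom.comp_apply]
      rw [Ideal.Quotient.eq_zero_iff_mem]
      have : (polyScale t).toRingHom (c • (X : 𝕜[X]) ^ e)
          = (t ^ e) • (polyScale t c * (X : 𝕜[X]) ^ e) := by
        rw [smul_eq_mul, AlgHom.toRingHom_eq_coe, RingHom.coe_coe, _root_.map_mul, map_pow, polyScale_X,
          _root_.smul_pow, mul_smul_comm]
      rw [this]
      refine Submodule.smul_of_tower_mem _ _ ?_
      exact Submodule.mem_span_singleton.mpr ⟨polyScale t c, by rw [smul_eq_mul]⟩)

lemma quotScaleHom_mk (t : 𝕜) (e : ℕ) (q : 𝕜[X]) :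
    quotScaleHom t e (Submodule.Quotient.mk q) = Submodule.Quotient.mk (polyScale t q) := rfl

noncomputable def quotScale (t : 𝕜) (ht : t ≠ 0) (e : ℕ) :
    (𝕜[X] ⧸ (𝕜[X] ∙ ((X : 𝕜[X]) ^ e))) ≃ₗ[𝕜] (𝕜[X] ⧸ (𝕜[X] ∙ ((X : 𝕜[X]) ^ e))) where
  toFun := quotScaleHom t e
  invFun := quotScaleHom t⁻¹ e
  map_add' := map_add _
  map_smul' := by
    intro c x
    obtain ⟨q, rfl⟩ := Submodule.Quotient.mk_surjective _ x
    show quotScaleHom t e _ = c • quotScaleHom t e _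
    rw [← Submodule.Quotient.mk_smul, quotScaleHom_mk, quotScaleHom_mk,
      _root_.map_smul, Submodule.Quotient.mk_smul]
  left_inv := by
    intro x
    obtain ⟨q, rfl⟩ := Submodule.Quotient.mk_surjective _ x
    show quotScaleHom t⁻¹ e (quotScaleHom t e _) = _
    rw [quotScaleHom_mk, quotScaleHom_mk, polyScale_polyScale, inv_mul_cancel₀ ht, polyScale_one]
  right_inv := by
    intro x
    obtain ⟨q, rfl⟩ := Submodule.Quotient.mk_surjective _ x
    show quotScaleHom t e (quotScaleHom t⁻¹ e _) = _
    rw [quotScaleHom_mk, quotScaleHom_mk, polyScale_polyScale, mul_inv_cancel₀ ht, polyScale_one]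

lemma quotScale_X_smul (t : 𝕜) (ht : t ≠ 0) (e : ℕ)
    (x : 𝕜[X] ⧸ (𝕜[X] ∙ ((X : 𝕜[X]) ^ e))) :
    quotScale t ht e ((X : 𝕜[X]) • x) = (C t * X) • quotScale t ht e x := by
  obtain ⟨q, rfl⟩ := Submodule.Quotient.mk_surjective _ x
  have hco : ∀ y, quotScale t ht e y = quotScaleHom t e y := fun _ => rfl
  rw [hco, hco, ← Submodule.Quotient.mk_smul, quotScaleHom_mk, quotScaleHom_mk,
    ← Submodule.Quotient.mk_smul]
  rw [smul_eq_mul, smul_eq_mul, _root_.map_mul, polyScale_X, smul_eq_C_mul, mul_assoc]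

end Conv

section Conv2

open Polynomial Module

universe u
variable {𝕜 : Type u} [Field 𝕜]

lemma mapRange_quotScale_X_smul {ι : Type*} [DecidableEq ι] (t : 𝕜) (ht : t ≠ 0) (e : ι → ℕ)
    (w : DirectSum ι fun i => 𝕜[X] ⧸ (𝕜[X] ∙ ((X : 𝕜[X]) ^ e i))) :
    DFinsupp.mapRange.linearEquiv (fun i => quotScale t ht (e i)) ((X : 𝕜[X]) • w)
      = (C t * X) • DFinsupp.mapRange.linearEquiv (fun i => quotScale t ht (e i)) w := by
  induction w using DirectSum.induction_on with
  | zero => rw [smul_zero, map_zero, smul_zero]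
  | of i x =>
      have hsingle : ∀ y, DFinsupp.mapRange.linearEquiv (fun i => quotScale t ht (e i))
          (DirectSum.lof 𝕜[X] ι (fun j => 𝕜[X] ⧸ (𝕜[X] ∙ ((X : 𝕜[X]) ^ e j))) i y)
          = DirectSum.lof 𝕜[X] ι (fun j => 𝕜[X] ⧸ (𝕜[X] ∙ ((X : 𝕜[X]) ^ e j))) i
            (quotScale t ht (e i) y) := by
        intro y
        simp only [DFinsupp.mapRange.linearEquiv_apply]
        erw [DFinsupp.mapRange_single]
        rfl
      have e1 : (X : 𝕜[X]) • DirectSum.lof 𝕜[X] ι (fun j => 𝕜[X] ⧸ (𝕜[X] ∙ ((X : 𝕜[X]) ^ e j))) i x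
          = DirectSum.lof 𝕜[X] ι (fun j => 𝕜[X] ⧸ (𝕜[X] ∙ ((X : 𝕜[X]) ^ e j))) i
            ((X : 𝕜[X]) • x) :=
        ((DirectSum.lof 𝕜[X] ι (fun j => 𝕜[X] ⧸ (𝕜[X] ∙ ((X : 𝕜[X]) ^ e j))) i).map_smul
          (X : 𝕜[X]) x).symm
      have e2 : ((C t * X : 𝕜[X]))
            • DirectSum.lof 𝕜[X] ι (fun j => 𝕜[X] ⧸ (𝕜[X] ∙ ((X : 𝕜[X]) ^ e j))) i
              (quotScale t ht (e i) x)
          = DirectSum.lof 𝕜[X] ι (fun j => 𝕜[X] ⧸ (𝕜[X] ∙ ((X : 𝕜[X]) ^ e j))) i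
            ((C t * X : 𝕜[X]) • quotScale t ht (e i) x) :=
        ((DirectSum.lof 𝕜[X] ι (fun j => 𝕜[X] ⧸ (𝕜[X] ∙ ((X : 𝕜[X]) ^ e j))) i).map_smul
          ((C t * X : 𝕜[X])) _).symm
      rw [← DirectSum.lof_eq_of 𝕜[X], e1, hsingle, hsingle, quotScale_X_smul, e2]
  | add x y hx hy => rw [smul_add, map_add, map_add, hx, hy, smul_add]

lemma conj_of_equiv {V : Type u} [AddCommGroup V] [Module 𝕜 V] (f : Module.End 𝕜 V)
    {W : Type*} [AddCommGroup W] [Module 𝕜[X] W] [Module 𝕜 W] [IsScalarTower 𝕜 𝕜[X] W]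
    (Ψ : AEval' f ≃ₗ[𝕜[X]] W) (D : W ≃ₗ[𝕜] W) (t : 𝕜)
    (hD : ∀ w, D ((X : 𝕜[X]) • w) = ((C t * X : 𝕜[X])) • D w) :
    ∃ g : V ≃ₗ[𝕜] V, ∀ v, g (f v) = t • f (g v) := by
  let ofE := AEval'.of f
  let Ψk := Ψ.restrictScalars 𝕜
  refine ⟨ofE ≪≫ₗ Ψk ≪≫ₗ D ≪≫ₗ Ψk.symm ≪≫ₗ ofE.symm, fun v => ?_⟩
  simp only [LinearEquiv.trans_apply]
  have h1 : ofE (f v) = (X : 𝕜[X]) • ofE v := (AEval'.X_smul_of f v).symm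
  have h2 : ∀ m, Ψk ((X : 𝕜[X]) • m) = (X : 𝕜[X]) • Ψk m := fun m => Ψ.map_smul _ m
  have h3 : ∀ u, Ψk.symm ((C t * X : 𝕜[X]) • u) = (C t * X : 𝕜[X]) • Ψk.symm u :=
    fun u => Ψ.symm.map_smul _ u
  rw [h1, h2, hD, h3]
  generalize (Ψk.symm (D (Ψk (ofE v)))) = u'
  rw [mul_smul, Module.AEval.of_symm_smul, Module.AEval.of_symm_X_smul, aeval_C]
  simp only [Module.End.smul_def, Module.algebraMap_end_apply]
  rfl

lemma exists_conj_smul_end {V : Type u} [AddCommGroup V] [Module 𝕜 V] [Module.Finite 𝕜 V]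
    (f : Module.End 𝕜 V) (hf : IsNilpotent f) (t : 𝕜) (ht : t ≠ 0) :
    ∃ g : V ≃ₗ[𝕜] V, ∀ v, g (f v) = t • f (g v) := by
  classical
  obtain ⟨k, hk⟩ := hf
  have hann : ∀ m : AEval' f, ((X : 𝕜[X]) ^ k) • m = 0 := by
    intro m
    apply (AEval'.of f).symm.injective
    rw [map_zero, Module.AEval.of_symm_smul, map_pow, aeval_X, hk]
    simp [Module.End.smul_def]
  have htor : Module.IsTorsion 𝕜[X] (AEval' f) := fun m =>
    ⟨⟨(X : 𝕜[X]) ^ k, mem_nonZeroDivisors_of_ne_zero (pow_ne_zero _ X_ne_zero)⟩, hann m⟩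
  obtain ⟨ι, hι, p, hp, e, ⟨Φ⟩⟩ := Module.equiv_directSum_of_isTorsion htor
  have hspan : ∀ i, (𝕜[X] ∙ (p i ^ e i)) = (𝕜[X] ∙ ((X : 𝕜[X]) ^ e i)) := by
    intro i
    rw [Ideal.submodule_span_eq, Ideal.submodule_span_eq,
      Ideal.span_singleton_eq_span_singleton]
    rcases Nat.eq_zero_or_pos (e i) with h0 | hpos
    · rw [h0, pow_zero, pow_zero]
    · have hz : ((X : 𝕜[X]) ^ k) •
          (DirectSum.lof 𝕜[X] ι (fun j => 𝕜[X] ⧸ (𝕜[X] ∙ (p j ^ e j))) i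
            (Submodule.Quotient.mk 1)) = 0 := by
        have h1 := hann (Φ.symm (DirectSum.lof 𝕜[X] ι
          (fun j => 𝕜[X] ⧸ (𝕜[X] ∙ (p j ^ e j))) i (Submodule.Quotient.mk 1)))
        apply_fun Φ at h1
        rwa [_root_.map_smul, Φ.apply_symm_apply, map_zero] at h1
      have hz2 : ((X : 𝕜[X]) ^ k) •
          (Submodule.Quotient.mk 1 : 𝕜[X] ⧸ (𝕜[X] ∙ (p i ^ e i))) = 0 := by
        have h2 := congrArg (fun w => w i) hz
        simpa only [DirectSum.smul_apply, DirectSum.lof_apply, DirectSum.zero_apply] using h2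
      have hmem : (X : 𝕜[X]) ^ k ∈ (𝕜[X] ∙ (p i ^ e i)) := by
        rw [← Submodule.Quotient.mk_eq_zero]
        have h4 : ((X : 𝕜[X]) ^ k • (Submodule.Quotient.mk 1 : 𝕜[X] ⧸ (𝕜[X] ∙ (p i ^ e i))))
            = Submodule.Quotient.mk ((X : 𝕜[X]) ^ k) := by
          rw [← Submodule.Quotient.mk_smul, smul_eq_mul, mul_one]
        rwa [h4] at hz2
      have hdvd : p i ^ e i ∣ (X : 𝕜[X]) ^ k := by
        obtain ⟨c, hc⟩ := Submodule.mem_span_singleton.mp hmem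
        exact ⟨c, by rw [← hc, smul_eq_mul, mul_comm]⟩
      have hpX : Associated (p i) (X : 𝕜[X]) := by
        have hdX : p i ∣ (X : 𝕜[X]) ^ k :=
          dvd_trans (dvd_pow_self _ (Nat.pos_iff_ne_zero.mp hpos)) hdvd
        exact (hp i).associated_of_dvd irreducible_X ((hp i).prime.dvd_of_dvd_pow hdX)
      exact Associated.pow_pow hpX
  exact conj_of_equiv f (W := DirectSum ι fun i => 𝕜[X] ⧸ (𝕜[X] ∙ ((X : 𝕜[X]) ^ e i)))
    (Φ.trans (DFinsupp.mapRange.linearEquiv fun i => Submodule.quotEquivOfEq _ _ (hspan i)))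
    (DFinsupp.mapRange.linearEquiv fun i => quotScale t ht (e i)) t
    (mapRange_quotScale_X_smul t ht e)

end Conv2

section Matrices

open Polynomial

universe v
variable {𝕜 : Type v} [Field 𝕜]

lemma aux_converse {n : ℕ} (A : Matrix (Fin n) (Fin n) 𝕜) (hA : IsNilpotent A)
    (t : 𝕜) (ht : t ≠ 0) :
    ∃ g : GeneralLinearGroup (Fin n) 𝕜,
      t • A = (g : Matrix (Fin n) (Fin n) 𝕜) * A *
        ((g⁻¹ : GeneralLinearGroup (Fin n) 𝕜) : Matrix (Fin n) (Fin n) 𝕜) := by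
  have hf : IsNilpotent (Matrix.toLin' A) := by
    have := hA.map (Matrix.toLinAlgEquiv' : Matrix (Fin n) (Fin n) 𝕜 ≃ₐ[𝕜] _)
    exact this
  obtain ⟨g, hg⟩ := exists_conj_smul_end (Matrix.toLin' A) hf t ht
  set P := LinearMap.toMatrix' (g : (Fin n → 𝕜) →ₗ[𝕜] (Fin n → 𝕜)) with hP
  set P' := LinearMap.toMatrix' (g.symm : (Fin n → 𝕜) →ₗ[𝕜] (Fin n → 𝕜)) with hP'
  have hgg : (g : (Fin n → 𝕜) →ₗ[𝕜] (Fin n → 𝕜)) ∘ₗ (g.symm : (Fin n → 𝕜) →ₗ[𝕜] (Fin n → 𝕜))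
      = LinearMap.id := by ext v; simp
  have hgg' : (g.symm : (Fin n → 𝕜) →ₗ[𝕜] (Fin n → 𝕜)) ∘ₗ (g : (Fin n → 𝕜) →ₗ[𝕜] (Fin n → 𝕜))
      = LinearMap.id := by ext v; simp
  have hPP' : P * P' = 1 := by
    rw [hP, hP', ← LinearMap.toMatrix'_comp, hgg, LinearMap.toMatrix'_id]
  have hP'P : P' * P = 1 := by
    rw [hP, hP', ← LinearMap.toMatrix'_comp, hgg', LinearMap.toMatrix'_id]
  have hcomm : (g : (Fin n → 𝕜) →ₗ[𝕜] (Fin n → 𝕜)) ∘ₗ Matrix.toLin' A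
      = (t • Matrix.toLin' A) ∘ₗ (g : (Fin n → 𝕜) →ₗ[𝕜] (Fin n → 𝕜)) :=
    LinearMap.ext fun v => by
      simp only [LinearMap.comp_apply, LinearMap.smul_apply, LinearEquiv.coe_coe]
      exact hg v
  have hmat : P * A = (t • A) * P := by
    have := congrArg LinearMap.toMatrix' hcomm
    rwa [LinearMap.toMatrix'_comp, LinearMap.toMatrix'_comp, _root_.map_smul,
      LinearMap.toMatrix'_toLin'] at this
  refine ⟨⟨P, P', hPP', hP'P⟩, ?_⟩
  show t • A = P * A * P'
  rw [hmat, mul_assoc, hPP', mul_one]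

end Matrices

section Forward

open Polynomial

variable {𝕜 : Type*} [Field 𝕜] [IsAlgClosed 𝕜]

lemma aux_forward {n : ℕ} (A : Matrix (Fin n) (Fin n) 𝕜)
    (H : ∀ t : 𝕜, t ≠ 0 → ∃ g : GeneralLinearGroup (Fin n) 𝕜,
      t • A = (g : Matrix (Fin n) (Fin n) 𝕜) * A *
        ((g⁻¹ : GeneralLinearGroup (Fin n) 𝕜) : Matrix (Fin n) (Fin n) 𝕜)) :
    IsNilpotent A := by
  have hsmul_one : ∀ c : 𝕜, Matrix.scalar (Fin n) c = c • (1 : Matrix (Fin n) (Fin n) 𝕜) := by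
    intro c
    rw [Matrix.scalar_apply]
    ext i j
    rcases eq_or_ne i j with rfl | hij
    · simp
    · simp [Matrix.diagonal_apply_ne _ hij, Matrix.one_apply_ne hij]
  have hroot : ∀ s : 𝕜, A.charpoly.IsRoot s → ∀ t : 𝕜, t ≠ 0 → A.charpoly.IsRoot (t * s) := by
    intro s hs t ht
    obtain ⟨g, hg⟩ := H t ht
    have hGL : (g : Matrix (Fin n) (Fin n) 𝕜) *
        ((g⁻¹ : GeneralLinearGroup (Fin n) 𝕜) : Matrix (Fin n) (Fin n) 𝕜) = 1 :=
      g.mul_inv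
    have key : A.charpoly.eval (t * s) = t ^ n * A.charpoly.eval s := by
      rw [aux_charpoly_eval, aux_charpoly_eval, hsmul_one, hsmul_one]
      have e1 : (g : Matrix (Fin n) (Fin n) 𝕜)
            * ((t * s) • (1 : Matrix (Fin n) (Fin n) 𝕜) - A)
            * ((g⁻¹ : GeneralLinearGroup (Fin n) 𝕜) : Matrix (Fin n) (Fin n) 𝕜)
          = (t * s) • (1 : Matrix (Fin n) (Fin n) 𝕜) - t • A := by
        rw [Matrix.mul_sub, Matrix.sub_mul, hg]
        congr 1
        rw [Matrix.mul_smul, mul_one, Matrix.smul_mul, hGL]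
      have e2 : ((t * s) • (1 : Matrix (Fin n) (Fin n) 𝕜) - A).det
          = ((t * s) • (1 : Matrix (Fin n) (Fin n) 𝕜) - t • A).det := by
        have hdet : ((g : Matrix (Fin n) (Fin n) 𝕜)).det
            * (((g⁻¹ : GeneralLinearGroup (Fin n) 𝕜) : Matrix (Fin n) (Fin n) 𝕜)).det = 1 := by
          rw [← Matrix.det_mul, hGL, Matrix.det_one]
        rw [← e1, Matrix.det_mul, Matrix.det_mul, mul_right_comm, hdet, one_mul]
      have e3 : (t * s) • (1 : Matrix (Fin n) (Fin n) 𝕜) - t • A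
          = t • (s • (1 : Matrix (Fin n) (Fin n) 𝕜) - A) := by
        rw [smul_sub, smul_smul]
      rw [e2, e3, Matrix.det_smul, Fintype.card_fin]
    have : A.charpoly.eval (t * s) = 0 := by rw [key, hs.eq_zero, mul_zero]
    exact this
  have hzero : ∀ s : 𝕜, A.charpoly.IsRoot s → s = 0 := by
    intro s hs
    by_contra hs0
    have hfin : {x : 𝕜 | A.charpoly.IsRoot x}.Finite :=
      Polynomial.finite_setOf_isRoot (A.charpoly_monic.ne_zero)
    have hinj : Set.InjOn (fun t : 𝕜 => t * s) {(0 : 𝕜)}ᶜ := fun a _ b _ h =>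
      mul_right_cancel₀ hs0 h
    have hsub : (fun t : 𝕜 => t * s) '' {(0 : 𝕜)}ᶜ ⊆ {x : 𝕜 | A.charpoly.IsRoot x} := by
      rintro _ ⟨t, ht, rfl⟩
      exact hroot s hs t ht
    have hinfin : ({(0 : 𝕜)}ᶜ : Set 𝕜).Infinite :=
      Set.Finite.infinite_compl (Set.finite_singleton 0)
    exact ((hinfin.image hinj).mono hsub) hfin
  have hcp : A.charpoly = Polynomial.X ^ n := by
    have h1 := (IsAlgClosed.splits A.charpoly).eq_prod_roots_of_monic (A.charpoly_monic)
    have h2 : A.charpoly.roots.map (fun a => Polynomial.X - Polynomial.C a)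
        = A.charpoly.roots.map (fun _ => (Polynomial.X : 𝕜[X])) :=
      Multiset.map_congr rfl (fun a ha => by
        rw [hzero a (Polynomial.isRoot_of_mem_roots ha), map_zero, sub_zero])
    have h3 : A.charpoly.roots.card = n := by
      rw [Polynomial.splits_iff_card_roots.mp (IsAlgClosed.splits A.charpoly),
        Matrix.charpoly_natDegree_eq_dim, Fintype.card_fin]
    rw [h1, h2, Multiset.map_const', Multiset.prod_replicate, h3]
  refine ⟨n, ?_⟩
  have := Matrix.aeval_self_charpoly A
  rwa [hcp, map_pow, Polynomial.aeval_X] at this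

end Forward

/-- Over an algebraically closed field `𝕜` and for `N ≥ 1`, a matrix `X ∈ M_N(𝕜)` has
conjugation orbit stable under all nonzero scalar multiplications (i.e. `tX` is conjugate
to `X` for every `t ≠ 0`) if and only if `X` is nilpotent. -/
theorem stmt10 {𝕜 : Type*} [Field 𝕜] [IsAlgClosed 𝕜] (N : ℕ) (hN : 1 ≤ N)
    (X : Matrix (Fin N) (Fin N) 𝕜) :
    (∀ t : 𝕜, t ≠ 0 → ∃ g : GeneralLinearGroup (Fin N) 𝕜,
        t • X = (g : Matrix (Fin N) (Fin N) 𝕜) * X * ((g⁻¹ : GeneralLinearGroup (Fin N) 𝕜) : Matrix (Fin N) (Fin N) 𝕜)) ↔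
      IsNilpotent X := by
  constructor
  · exact aux_forward X
  · intro hX t ht
    exact aux_converse X hX t ht
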